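/- If σ' is a solution of the equation obtained from U = V by replacing every occurrence of a fixed word w ∈ Γ⁺ (in both U and V) with a fresh letter c not occurring in U, V, or any σ'(X), then the substitution σ obtained from σ' by replacing every occurrence of c with w (in each σ'(X)) is a solution of U = V. -/

import Mathlib

variable {Γ 𝒳 : Type*}

def subApp (σ : 𝒳 → List Γ) (w : List (Γ ⊕ 𝒳)) : List Γ :=
  w.flatMap (Sum.elim (fun a => [a]) σ)

/-- Greedily (leftmost) replace all occurrences of the pattern `p` by `r`. -/
def replAllBy {α : Type*} [DecidableEq α] (p r : List α) : List α → List α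
  | [] => []
  | x :: xs =>
    if h : p <+: (x :: xs) ∧ p ≠ [] then
      r ++ replAllBy p r ((x :: xs).drop p.length)
    else
      x :: replAllBy p r xs
termination_by l => l.length
decreasing_by
  · have hp : 0 < p.length := List.length_pos_iff.mpr h.2
    simp only [List.length_drop]
    simp only [List.length_cons]
    omega
  · simp

lemma flatMap_id_of {α : Type*} (f : α → List α) :
    ∀ l : List α, (∀ x ∈ l, f x = [x]) → l.flatMap f = l := by
  intro l
  induction l with
  | nil => simp
  | cons a t ih =>
    intro h
    simp only [List.flatMap_cons, h a (by simp), ih (fun x hx => h x (by simp [hx]))]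
    rfl

lemma replAllBy_nil {α : Type*} [DecidableEq α] (p r : List α) :
    replAllBy p r [] = [] := by rw [replAllBy]

lemma replAllBy_cons {α : Type*} [DecidableEq α] (p r : List α) (x : α) (xs : List α) :
    replAllBy p r (x :: xs) =
      if p <+: (x :: xs) ∧ p ≠ [] then
        r ++ replAllBy p r ((x :: xs).drop p.length)
      else
        x :: replAllBy p r xs := by
  rw [replAllBy]
  split <;> simp_all

lemma key_lemma [DecidableEq Γ] [DecidableEq 𝒳] (w : List Γ) (hw : w ≠ []) (c : Γ) (σ' : 𝒳 → List Γ)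
    (hσ : ∀ X, c ∉ σ' X) :
    ∀ n (U : List (Γ ⊕ 𝒳)), U.length ≤ n → Sum.inl c ∉ U →
      (subApp σ' (replAllBy (w.map Sum.inl) [Sum.inl c] U)).flatMap
        (fun x => if x = c then w else [x]) = subApp σ' U := by
  intro n
  induction n with
  | zero =>
    intro U hlen _
    have : U = [] := by
      cases U with
      | nil => rfl
      | cons a t => simp at hlen
    subst this
    simp [replAllBy_nil, subApp]
  | succ n ih =>
    intro U hlen hc
    cases U with
    | nil => simp [replAllBy_nil, subApp]
    | cons x xs =>
      rw [replAllBy_cons]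
      by_cases h : ((w.map Sum.inl : List (Γ ⊕ 𝒳)) <+: (x :: xs)) ∧ (w.map Sum.inl : List (Γ ⊕ 𝒳)) ≠ []
      · rw [if_pos h]
        obtain ⟨t, ht⟩ := h.1
        have hdrop : (x :: xs).drop (w.map Sum.inl : List (Γ ⊕ 𝒳)).length = t := by
          rw [← ht]; exact List.drop_left
        have hct : Sum.inl c ∉ t := fun hmem => hc (by rw [← ht]; exact List.mem_append_right _ hmem)
        have hlent : t.length ≤ n := by
          have hwl : 0 < w.length := List.length_pos_iff.mpr hw
          have h1 := congrArg List.length ht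
          simp only [List.length_cons, List.length_append, List.length_map] at h1
          simp only [List.length_cons] at hlen
          omega
        rw [hdrop]
        have hIH := ih t hlent hct
        have hsub : (x :: xs).flatMap (Sum.elim (fun a => [a]) σ') =
            w ++ t.flatMap (Sum.elim (fun a => [a]) σ') := by
          rw [← ht, List.flatMap_append, List.flatMap_map]
          congr 1
          exact flatMap_id_of _ w (fun a _ => rfl)
        simp only [subApp] at hIH ⊢
        rw [hsub]
        simp only [List.flatMap_append, List.flatMap_cons, List.flatMap_nil]
        rw [hIH]
        simp
      · rw [if_neg h]
        have hxc : x ≠ Sum.inl c := fun hx => hc (by simp [hx])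
        have hcs : Sum.inl c ∉ xs := fun hmem => hc (by simp [hmem])
        have hIH := ih xs (by simp at hlen; omega) hcs
        simp only [subApp, List.flatMap_cons, List.flatMap_append] at hIH ⊢
        rw [hIH]
        congr 1
        cases x with
        | inl a =>
          have : a ≠ c := fun hac => hxc (by rw [hac])
          simp [this]
        | inr X =>
          simp only [Sum.elim_inr]
          exact flatMap_id_of _ (σ' X) (fun y hy => if_neg (fun hyc : y = c => hσ X (hyc ▸ hy)))

/-- If σ' solves the equation obtained from U = V by greedily replacing every
occurrence of the word w by a fresh letter c (c occurring nowhere in U, V, or any σ'(X)),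
then σ, obtained from σ' by replacing every c by w inside the images of variables,
solves U = V. -/
theorem stmt1 [DecidableEq Γ] [DecidableEq 𝒳]
    (U V : List (Γ ⊕ 𝒳)) (w : List Γ) (hw : w ≠ []) (c : Γ)
    (σ' : 𝒳 → List Γ)
    (hfreshU : Sum.inl c ∉ U) (hfreshV : Sum.inl c ∉ V)
    (hfreshσ : ∀ X : 𝒳, c ∉ σ' X)
    (hsol : subApp σ' (replAllBy (w.map Sum.inl) [Sum.inl c] U) =
            subApp σ' (replAllBy (w.map Sum.inl) [Sum.inl c] V)) :
    subApp (fun X => (σ' X).flatMap (fun x => if x = c then w else [x])) U =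
      subApp (fun X => (σ' X).flatMap (fun x => if x = c then w else [x])) V := by
  have hσeq : (fun X => (σ' X).flatMap (fun x => if x = c then w else [x])) = σ' := by
    funext X
    exact flatMap_id_of _ (σ' X) (fun y hy => if_neg (fun hyc : y = c => hfreshσ X (hyc ▸ hy)))
  rw [hσeq]
  have hU := key_lemma w hw c σ' hfreshσ U.length U le_rfl hfreshU
  have hV := key_lemma w hw c σ' hfreshσ V.length V le_rfl hfreshV
  rw [← hU, ← hV, hsol]
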